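/- arXiv:1008.1090 — 2 statements merged into one kernel-verified Lean document; each statement's English description precedes it below -/
import Mathlib

section
/- The multiplier algebra M(H) of a reproducing kernel Hilbert space H is reflexive: any bounded operator T on H leaving invariant every invariant subspace of M(H) is itself a multiplication operator. -/
open scoped ComplexInnerProductSpace

/-- `T` acts as the multiplication operator with symbol `f`. -/
def IsMultOp {X H : Type*} [NormedAddCommGroup H] [InnerProductSpace ℂ H]
    (k : X → H) (f : X → ℂ) (T : H →L[ℂ] H) : Prop :=
  ∀ (h : H) (x : X), ⟪k x, T h⟫ = f x * ⟪k x, h⟫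

/-- The multiplier algebra `M(H)` of a reproducing kernel Hilbert space is reflexive:
any bounded operator `T` leaving invariant every closed subspace that is invariant for
all multiplication operators is itself a multiplication operator. -/
theorem multiplier_algebra_reflexive
    {X H : Type*} [NormedAddCommGroup H] [InnerProductSpace ℂ H] [CompleteSpace H]
    (k : X → H) (T : H →L[ℂ] H)
    (hT : ∀ L : Submodule ℂ H, IsClosed (L : Set H) →
      (∀ M : H →L[ℂ] H, (∃ f : X → ℂ, IsMultOp k f M) → ∀ x ∈ L, M x ∈ L) →
      ∀ x ∈ L, T x ∈ L) :
    ∃ f : X → ℂ, IsMultOp k f T := by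
  -- key: for each x, if ⟪k x, h⟫ = 0 then ⟪k x, T h⟫ = 0
  have key : ∀ (x : X) (h : H), ⟪k x, h⟫ = 0 → ⟪k x, T h⟫ = 0 := by
    intro x h hh
    have hL := hT ((ℂ ∙ k x)ᗮ) (Submodule.isClosed_orthogonal _)
    have hinv : ∀ M : H →L[ℂ] H, (∃ f : X → ℂ, IsMultOp k f M) →
        ∀ y ∈ (ℂ ∙ k x)ᗮ, M y ∈ (ℂ ∙ k x)ᗮ := by
      intro M ⟨f, hf⟩ y hy
      rw [Submodule.mem_orthogonal_singleton_iff_inner_right] at hy ⊢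
      rw [hf y x, hy, mul_zero]
    have := hL hinv h (Submodule.mem_orthogonal_singleton_iff_inner_right.mpr hh)
    exact Submodule.mem_orthogonal_singleton_iff_inner_right.mp this
  refine ⟨fun x => ⟪k x, T (k x)⟫ / ⟪k x, k x⟫, fun h x => ?_⟩
  by_cases hk : k x = 0
  · simp [hk]
  · have hkk : ⟪k x, k x⟫ ≠ 0 := by
      exact fun h0 => hk ((inner_self_eq_zero (𝕜 := ℂ)).mp h0)
    set a : ℂ := ⟪k x, h⟫ / ⟪k x, k x⟫ with ha
    have h0 : ⟪k x, h - a • k x⟫ = 0 := by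
      rw [inner_sub_right, inner_smul_right, ha]
      field_simp
      ring
    have := key x (h - a • k x) h0
    rw [map_sub, inner_sub_right, map_smul, inner_smul_right, sub_eq_zero] at this
    rw [this, ha]
    field_simp
end

section
/- Let A be a unital weak-* closed algebra on H and J a WOT-closed ideal. Then the supremum of ‖P_{N_L} M_f P_{N_L}‖ over all invariant subspaces L equals the supremum over all cyclic invariant subspaces L = A[h], where N_L = L ⊖ closure(JL). -/
open scoped ComplexInnerProductSpace

/-- The weak operator topology on `B(H)`. -/
noncomputable def wotTopology (H : Type*) [NormedAddCommGroup H] [InnerProductSpace ℂ H] :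
    TopologicalSpace (H →L[ℂ] H) :=
  ⨆ p : H × H, TopologicalSpace.induced (fun T : H →L[ℂ] H => ⟪p.1, T p.2⟫) inferInstance

/-- `P` is the orthogonal projection of `H` onto the subspace `L`. -/
def IsProjOn {H : Type*} [NormedAddCommGroup H] [InnerProductSpace ℂ H]
    (L : Submodule ℂ H) (P : H →L[ℂ] H) : Prop :=
  ∀ x : H, P x ∈ L ∧ x - P x ∈ Lᗮ

/-- `closure(J L)`: the closed linear span of `{S u : S ∈ J, u ∈ L}`. -/
def idealRange {H : Type*} [NormedAddCommGroup H] [InnerProductSpace ℂ H]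
    (J : Set (H →L[ℂ] H)) (L : Submodule ℂ H) : Submodule ℂ H :=
  (Submodule.span ℂ {v | ∃ S ∈ J, ∃ u ∈ L, v = S u}).topologicalClosure

/-- Linear span of the orbit of `h` under a set of operators. -/
def orbit {H : Type*} [NormedAddCommGroup H] [InnerProductSpace ℂ H]
    (A : Set (H →L[ℂ] H)) (h : H) : Submodule ℂ H :=
  Submodule.span ℂ {v | ∃ T ∈ A, v = T h}

section Aux

variable {H : Type*} [NormedAddCommGroup H] [InnerProductSpace ℂ H]

lemma IsProjOn.eq_of {N : Submodule ℂ H} {P : H →L[ℂ] H} (hP : IsProjOn N P)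
    {x y : H} (hy : y ∈ N) (hxy : x - y ∈ Nᗮ) : P x = y := by
  have h1 : P x - y ∈ N := sub_mem (hP x).1 hy
  have h2 : P x - y ∈ Nᗮ := by
    have := sub_mem hxy (hP x).2
    have e : (x - y) - (x - P x) = P x - y := by abel
    rwa [e] at this
  have h0 : P x - y = 0 := (Submodule.disjoint_def.1 N.orthogonal_disjoint) _ h1 h2
  exact sub_eq_zero.mp h0

lemma IsProjOn.fix {N : Submodule ℂ H} {P : H →L[ℂ] H} (hP : IsProjOn N P)
    {x : H} (hx : x ∈ N) : P x = x :=
  hP.eq_of hx (by simpa using Nᗮ.zero_mem)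

lemma IsProjOn.norm_apply_le {N : Submodule ℂ H} {P : H →L[ℂ] H} (hP : IsProjOn N P)
    (x : H) : ‖P x‖ ≤ ‖x‖ := by
  have horth : ⟪P x, x - P x⟫ = 0 :=
    Submodule.inner_right_of_mem_orthogonal (hP x).1 (hP x).2
  have hx : x = P x + (x - P x) := by abel
  have h2 : ‖x‖ ^ 2 = ‖P x‖ ^ 2 + ‖x - P x‖ ^ 2 := by
    calc ‖x‖ ^ 2 = ‖P x + (x - P x)‖ ^ 2 := by rw [← hx]
    _ = ‖P x‖ ^ 2 + 2 * RCLike.re ⟪P x, x - P x⟫ + ‖x - P x‖ ^ 2 := norm_add_sq _ _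
    _ = ‖P x‖ ^ 2 + ‖x - P x‖ ^ 2 := by rw [horth]; simp
  nlinarith [norm_nonneg (P x), norm_nonneg x, sq_nonneg ‖x - P x‖]

/-- minimality of distance -/
lemma IsProjOn.dist_min {M : Submodule ℂ H} {Q : H →L[ℂ] H} (hQ : IsProjOn M Q)
    (x : H) {m : H} (hm : m ∈ M) : ‖x - Q x‖ ≤ ‖x - m‖ := by
  have horth : ⟪Q x - m, x - Q x⟫ = 0 :=
    Submodule.inner_right_of_mem_orthogonal (sub_mem (hQ x).1 hm) (hQ x).2
  have hx : x - m = (x - Q x) + (Q x - m) := by abel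
  have h2 : ‖x - m‖ ^ 2 = ‖x - Q x‖ ^ 2 + ‖Q x - m‖ ^ 2 := by
    calc ‖x - m‖ ^ 2 = ‖(Q x - m) + (x - Q x)‖ ^ 2 := by rw [show (Q x - m) + (x - Q x) = x - m by abel]
    _ = ‖Q x - m‖ ^ 2 + 2 * RCLike.re ⟪Q x - m, x - Q x⟫ + ‖x - Q x‖ ^ 2 := norm_add_sq _ _
    _ = ‖x - Q x‖ ^ 2 + ‖Q x - m‖ ^ 2 := by rw [horth]; simp; ring
  nlinarith [norm_nonneg (x - m), norm_nonneg (x - Q x), sq_nonneg ‖Q x - m‖]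

lemma isProjOn_exists [CompleteSpace H] {N : Submodule ℂ H} (hN : IsClosed (N : Set H)) :
    ∃ P : H →L[ℂ] H, IsProjOn N P := by
  haveI : CompleteSpace N := hN.completeSpace_coe
  exact ⟨N.subtypeL ∘L N.orthogonalProjectionOnto, fun x =>
    ⟨SetLike.coe_mem _, N.sub_starProjection_mem_orthogonal x⟩⟩

lemma IsProjOn.compress_norm_le {N : Submodule ℂ H} {P : H →L[ℂ] H} (hP : IsProjOn N P)
    (T : H →L[ℂ] H) : ‖P * T * P‖ ≤ ‖T‖ := by
  have hPnorm : ‖P‖ ≤ 1 :=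
    ContinuousLinearMap.opNorm_le_bound _ zero_le_one (fun x => by simpa using hP.norm_apply_le x)
  calc ‖P * T * P‖ ≤ ‖P * T‖ * ‖P‖ := norm_mul_le _ _
  _ ≤ (‖P‖ * ‖T‖) * ‖P‖ := by
      have := norm_mul_le P T
      nlinarith [norm_nonneg P, norm_nonneg (P * T)]
  _ ≤ ‖T‖ := by
      have hsq : ‖P‖ * ‖P‖ ≤ 1 := mul_le_one₀ hPnorm (norm_nonneg P) hPnorm
      nlinarith [norm_nonneg P, norm_nonneg T]

end Aux

/-- The supremum of `‖P_{N_L} M_f P_{N_L}‖` over all invariant subspaces `L` equals the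
supremum over all cyclic invariant subspaces `L = A[h]`, where `N_L = L ⊖ closure(JL)`. -/
theorem sup_compressions_eq_sup_over_cyclic
    {H : Type*} [NormedAddCommGroup H] [InnerProductSpace ℂ H] [CompleteSpace H]
    (A : Subalgebra ℂ (H →L[ℂ] H))
    (hAws : @IsClosed _ (wotTopology H) (A : Set (H →L[ℂ] H)))
    (J : Set (H →L[ℂ] H)) (hJA : J ⊆ A) (hJ0 : (0 : H →L[ℂ] H) ∈ J)
    (hJideal : ∀ T ∈ (A : Set (H →L[ℂ] H)), ∀ S ∈ J, T * S ∈ J ∧ S * T ∈ J)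
    (hJwot : @IsClosed _ (wotTopology H) J)
    (T : H →L[ℂ] H) (hT : T ∈ A) :
    sSup {r : ℝ | ∃ L : Submodule ℂ H, IsClosed (L : Set H) ∧
        (∀ S ∈ (A : Set (H →L[ℂ] H)), ∀ x ∈ L, S x ∈ L) ∧
        ∃ Pn : H →L[ℂ] H, IsProjOn (L ⊓ (idealRange J L)ᗮ) Pn ∧ r = ‖Pn * T * Pn‖} =
    sSup {r : ℝ | ∃ h : H, ∃ Pn : H →L[ℂ] H,
        IsProjOn ((orbit (A : Set (H →L[ℂ] H)) h).topologicalClosure ⊓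
          (idealRange J ((orbit (A : Set (H →L[ℂ] H)) h).topologicalClosure))ᗮ) Pn ∧
        r = ‖Pn * T * Pn‖} := by
  classical
  set S₁ := {r : ℝ | ∃ L : Submodule ℂ H, IsClosed (L : Set H) ∧
        (∀ S ∈ (A : Set (H →L[ℂ] H)), ∀ x ∈ L, S x ∈ L) ∧
        ∃ Pn : H →L[ℂ] H, IsProjOn (L ⊓ (idealRange J L)ᗮ) Pn ∧ r = ‖Pn * T * Pn‖} with hS₁
  set S₂ := {r : ℝ | ∃ h : H, ∃ Pn : H →L[ℂ] H,
        IsProjOn ((orbit (A : Set (H →L[ℂ] H)) h).topologicalClosure ⊓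
          (idealRange J ((orbit (A : Set (H →L[ℂ] H)) h).topologicalClosure))ᗮ) Pn ∧
        r = ‖Pn * T * Pn‖} with hS₂
  -- invariance of cyclic subspaces
  have horbit_inv : ∀ h : H, ∀ S ∈ (A : Set (H →L[ℂ] H)), ∀ x ∈
      (orbit (A : Set (H →L[ℂ] H)) h).topologicalClosure,
      S x ∈ (orbit (A : Set (H →L[ℂ] H)) h).topologicalClosure := by
    intro h S hS x hx
    have hspan : ∀ y ∈ orbit (A : Set (H →L[ℂ] H)) h, S y ∈ orbit (A : Set (H →L[ℂ] H)) h := by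
      intro y hy
      induction hy using Submodule.span_induction with
      | mem v hv =>
        obtain ⟨R, hR, rfl⟩ := hv
        exact Submodule.subset_span ⟨S * R, mul_mem hS hR, by simp⟩
      | zero => simp
      | add a b _ _ ha hb => simpa [map_add] using add_mem ha hb
      | smul c a _ ha => simpa [map_smul] using Submodule.smul_mem _ c ha
    have hx' : x ∈ closure (orbit (A : Set (H →L[ℂ] H)) h : Set H) := hx
    have : S x ∈ closure (S '' (orbit (A : Set (H →L[ℂ] H)) h : Set H)) :=
      (image_closure_subset_closure_image S.continuous) ⟨x, hx', rfl⟩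
    refine closure_mono ?_ this
    rintro _ ⟨y, hy, rfl⟩
    exact hspan y hy
  -- 0 ∈ S₂
  have h0₂ : (0 : ℝ) ∈ S₂ := by
    refine ⟨0, 0, ?_, by simp⟩
    have horb : orbit (A : Set (H →L[ℂ] H)) (0 : H) = ⊥ := by
      refine le_bot_iff.1 (Submodule.span_le.2 ?_)
      rintro _ ⟨R, hR, rfl⟩; simp
    have hclos : (orbit (A : Set (H →L[ℂ] H)) (0 : H)).topologicalClosure = ⊥ := by
      rw [horb]
      exact le_bot_iff.1 ((⊥ : Submodule ℂ H).topologicalClosure_minimal le_rfl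
        (by simpa [Submodule.bot_coe] using isClosed_singleton))
    intro x
    constructor
    · simp
    · rw [hclos, bot_inf_eq, Submodule.bot_orthogonal_eq_top]
      simp
  -- bounds
  have hbdd₂ : BddAbove S₂ := by
    refine ⟨‖T‖, ?_⟩
    rintro r ⟨h, Pn, hPn, rfl⟩
    exact hPn.compress_norm_le T
  have hbdd₁ : BddAbove S₁ := by
    refine ⟨‖T‖, ?_⟩
    rintro r ⟨L, _, _, Pn, hPn, rfl⟩
    exact hPn.compress_norm_le T
  have hsSup₂_nonneg : (0 : ℝ) ≤ sSup S₂ := le_csSup hbdd₂ h0₂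
  apply le_antisymm
  · -- sSup S₁ ≤ sSup S₂
    refine Real.sSup_le ?_ hsSup₂_nonneg
    rintro r ⟨L, hLc, hLinv, Pn, hPn, rfl⟩
    -- key: bound the operator norm pointwise
    set M := idealRange J L with hM
    have hMclosed : IsClosed (M : Set H) := Submodule.isClosed_topologicalClosure _
    have hML : M ≤ L := by
      refine Submodule.topologicalClosure_minimal _ (Submodule.span_le.2 ?_) hLc
      rintro _ ⟨S, hS, u, hu, rfl⟩
      exact hLinv S (hJA hS) u hu
    obtain ⟨Q, hQ⟩ := isProjOn_exists hMclosed
    refine ContinuousLinearMap.opNorm_le_bound _ hsSup₂_nonneg (fun x => ?_)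
    set h := Pn x with hh
    have hhN : h ∈ L ⊓ Mᗮ := (hPn x).1
    have hhL : h ∈ L := hhN.1
    have hhMo : h ∈ Mᗮ := hhN.2
    set L' := (orbit (A : Set (H →L[ℂ] H)) h).topologicalClosure with hL'
    set M' := idealRange J L' with hM'
    have hL'closed : IsClosed (L' : Set H) := Submodule.isClosed_topologicalClosure _
    have hL'L : L' ≤ L := by
      refine Submodule.topologicalClosure_minimal _ (Submodule.span_le.2 ?_) hLc
      rintro _ ⟨R, hR, rfl⟩
      exact hLinv R hR h hhL
    have hM'M : M' ≤ M := by
      refine Submodule.topologicalClosure_minimal _ (Submodule.span_le.2 ?_) hMclosed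
      rintro _ ⟨S, hS, u, hu, rfl⟩
      exact Submodule.le_topologicalClosure _ (Submodule.subset_span ⟨S, hS, u, hL'L hu, rfl⟩)
    have hM'L' : M' ≤ L' := by
      refine Submodule.topologicalClosure_minimal _ (Submodule.span_le.2 ?_) hL'closed
      rintro _ ⟨S, hS, u, hu, rfl⟩
      exact horbit_inv h S (hJA hS) u hu
    have hM'closed : IsClosed (M' : Set H) := Submodule.isClosed_topologicalClosure _
    obtain ⟨Q', hQ'⟩ := isProjOn_exists hM'closed
    set N' := L' ⊓ M'ᗮ with hN'
    have hN'closed : IsClosed (N' : Set H) := by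
      rw [hN']
      have : ((L' ⊓ M'ᗮ : Submodule ℂ H) : Set H) = (L' : Set H) ∩ (M'ᗮ : Set H) := rfl
      rw [this]
      exact hL'closed.inter M'.isClosed_orthogonal
    obtain ⟨Pn', hPn'⟩ := isProjOn_exists hN'closed
    -- h ∈ N'
    have hhL' : h ∈ L' := by
      refine Submodule.le_topologicalClosure _ ?_
      exact Submodule.subset_span ⟨1, one_mem A, by simp⟩
    have hhN' : h ∈ N' := by
      rw [hN']; exact Submodule.mem_inf.2 ⟨hhL', Submodule.orthogonal_le hM'M hhMo⟩
    -- w = T h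
    set w := T h with hw
    have hwL' : w ∈ L' := horbit_inv h T hT h hhL'
    have hwL : w ∈ L := hL'L hwL'
    -- compute projections of w
    have hPnw : Pn w = w - Q w := by
      refine hPn.eq_of ⟨sub_mem hwL (hML (hQ w).1), (hQ w).2⟩ ?_
      have : w - (w - Q w) = Q w := by abel
      rw [this]
      intro u hu
      exact Submodule.inner_left_of_mem_orthogonal (hQ w).1 hu.2
    have hPn'w : Pn' w = w - Q' w := by
      refine hPn'.eq_of ⟨sub_mem hwL' (hM'L' (hQ' w).1), (hQ' w).2⟩ ?_
      have : w - (w - Q' w) = Q' w := by abel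
      rw [this]
      intro u hu
      exact Submodule.inner_left_of_mem_orthogonal (hQ' w).1 hu.2
    have hkey : ‖Pn w‖ ≤ ‖Pn' w‖ := by
      rw [hPnw, hPn'w]
      exact hQ.dist_min w (hM'M (hQ' w).1)
    -- assemble
    have hPn'h : Pn' h = h := hPn'.fix hhN'
    have hmem : ‖Pn' * T * Pn'‖ ∈ S₂ := ⟨h, Pn', hPn', rfl⟩
    have hle : ‖Pn' * T * Pn'‖ ≤ sSup S₂ := le_csSup hbdd₂ hmem
    calc ‖(Pn * T * Pn) x‖ = ‖Pn w‖ := by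
          simp only [ContinuousLinearMap.mul_apply, ← hh, hw]
    _ ≤ ‖Pn' w‖ := hkey
    _ = ‖(Pn' * T * Pn') h‖ := by
          simp only [ContinuousLinearMap.mul_apply, hPn'h, hw]
    _ ≤ ‖Pn' * T * Pn'‖ * ‖h‖ := ContinuousLinearMap.le_opNorm _ _
    _ ≤ sSup S₂ * ‖x‖ := by
          have h1 : ‖h‖ ≤ ‖x‖ := hPn.norm_apply_le x
          have h2 : (0:ℝ) ≤ ‖Pn' * T * Pn'‖ := norm_nonneg _
          nlinarith [norm_nonneg h]
  · -- sSup S₂ ≤ sSup S₁ : S₂ ⊆ S₁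
    refine csSup_le_csSup hbdd₁ ⟨0, h0₂⟩ ?_
    rintro r ⟨h, Pn, hPn, rfl⟩
    exact ⟨(orbit (A : Set (H →L[ℂ] H)) h).topologicalClosure,
      Submodule.isClosed_topologicalClosure _, horbit_inv h, Pn, hPn, rfl⟩
end
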